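/- A group Γ is left-orderable if and only if, for every finite list g₁,…,gₙ of nontrivial elements of Γ, there exist signs ε₁,…,εₙ ∈ {±1} such that the subsemigroup generated by {g₁^{ε₁},…,gₙ^{εₙ}} does not contain the identity element. -/

import Mathlib

/-- A group is left-orderable if it admits a left-invariant strict total order. -/
def LeftOrderable (G : Type*) [Group G] : Prop :=
  ∃ r : G → G → Prop, IsStrictTotalOrder G r ∧ ∀ a b c : G, r a b → r (c * a) (c * b)

/-- A group is left-orderable iff for every finite list of nontrivial elements there
is a choice of signs such that the subsemigroup generated by the correspondingly
signed powers does not contain the identity. -/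
theorem leftOrderable_iff_signs (G : Type*) [Group G] :
    LeftOrderable G ↔
      ∀ (n : ℕ) (g : Fin n → G), (∀ i, g i ≠ 1) →
        ∃ ε : Fin n → ℤ, (∀ i, ε i = 1 ∨ ε i = -1) ∧
          (1 : G) ∉ Subsemigroup.closure (Set.range fun i => g i ^ ε i) := by
  classical
  constructor
  · rintro ⟨r, hr, hl⟩ n g hg
    haveI := hr
    refine ⟨fun i => if r 1 (g i) then 1 else -1, fun i => by by_cases h' : r 1 (g i) <;> simp [h'], ?_⟩
    set S : Subsemigroup G :=
      { carrier := {x | r 1 x}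
        mul_mem' := by
          intro a b ha hb
          have h1 : r a (a * b) := by simpa using hl 1 b a hb
          exact hr.trans _ _ _ ha h1 }
    have hsub : Subsemigroup.closure (Set.range fun i => g i ^ (if r 1 (g i) then (1:ℤ) else -1)) ≤ S := by
      apply Subsemigroup.closure_le.2
      rintro x ⟨i, rfl⟩
      by_cases hri : r 1 (g i)
      · simp only [hri, if_true, zpow_one]
        exact hri
      · rcases trichotomous_of r 1 (g i) with h | h | h
        · exact absurd h hri
        · exact absurd h.symm (hg i)
        · have : r ((g i)⁻¹ * g i) ((g i)⁻¹ * 1) := hl _ _ _ h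
          simp only [hri, if_false, zpow_neg, zpow_one]
          exact (by simpa [hri] using this : r 1 (g i)⁻¹)
    intro hmem
    exact hr.irrefl 1 (hsub hmem)
  · intro h
    have key : ∀ F : Finset G, ∃ P : Subsemigroup G, (1:G) ∉ P ∧
        ∀ x ∈ F, x ≠ 1 → x ∈ P ∨ x⁻¹ ∈ P := by
      intro F
      set l := (F.filter (· ≠ 1)).toList with hl
      have hmem' : ∀ y ∈ l, y ≠ 1 := by
        intro y hy
        rw [hl, Finset.mem_toList, Finset.mem_filter] at hy
        simpa using hy.2
      have hmem : ∀ i : Fin l.length, l.get i ≠ 1 := fun i =>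
        hmem' _ (List.get_mem l i)
      obtain ⟨ε, hε, h1⟩ := h l.length (fun i => l.get i) hmem
      refine ⟨Subsemigroup.closure (Set.range fun i => l.get i ^ ε i), h1, ?_⟩
      intro x hx hx1
      have hxl : x ∈ l := by
        rw [hl, Finset.mem_toList, Finset.mem_filter]
        exact ⟨hx, by simpa using hx1⟩
      obtain ⟨i, hi⟩ := List.mem_iff_get.mp hxl
      have hxi : x ^ ε i ∈ Subsemigroup.closure (Set.range fun i => l.get i ^ ε i) :=
        Subsemigroup.subset_closure ⟨i, by simp only []; rw [← hi]⟩
      rcases hε i with h' | h'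
      · left; simpa [h'] using hxi
      · right; rw [h'] at hxi; simpa using hxi
    choose P hP1 hP2 using key
    set U : Ultrafilter (Finset G) := Ultrafilter.of Filter.atTop with hU
    have hUle : (U : Filter (Finset G)) ≤ Filter.atTop := Ultrafilter.of_le _
    set pos : G → Prop := fun x => {F | x ∈ P F} ∈ U with hpos
    have pos_mul : ∀ a b, pos a → pos b → pos (a * b) := by
      intro a b ha hb
      refine (U : Filter (Finset G)).sets_of_superset (Filter.inter_mem ha hb) ?_
      rintro F ⟨h1, h2⟩
      show a * b ∈ P F
      exact mul_mem (show a ∈ P F from h1) (show b ∈ P F from h2)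
    have pos_one : ¬ pos 1 := by
      intro hcon
      obtain ⟨F, hF⟩ := Filter.nonempty_of_mem (f := (U : Filter (Finset G))) hcon
      exact hP1 F hF
    have pos_total : ∀ x : G, x ≠ 1 → pos x ∨ pos x⁻¹ := by
      intro x hx
      by_contra hcon
      push_neg at hcon
      have hc1 : {F | x ∈ P F}ᶜ ∈ U := Ultrafilter.compl_mem_iff_notMem.2 hcon.1
      have hc2 : {F | x⁻¹ ∈ P F}ᶜ ∈ U := Ultrafilter.compl_mem_iff_notMem.2 hcon.2
      have hm : {F : Finset G | {x} ≤ F} ∈ U := hUle (Filter.mem_atTop {x})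
      obtain ⟨F, hF1, hF2, hF3⟩ := Filter.nonempty_of_mem (f := (U : Filter (Finset G)))
        (Filter.inter_mem hm (Filter.inter_mem hc1 hc2))
      rcases hP2 F x (by simpa using hF1) hx with h' | h'
      · exact hF2 h'
      · exact hF3 h'
    refine ⟨fun a b => pos (a⁻¹ * b), ?_, ?_⟩
    · refine { trichotomous := ?_, irrefl := ?_, trans := ?_ }
      · intro a b
        suffices H : pos (a⁻¹ * b) ∨ a = b ∨ pos (b⁻¹ * a) from
          fun h1 h2 => (H.resolve_left h1).resolve_right h2
        by_cases hab : a = b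
        · exact Or.inr (Or.inl hab)
        · have hne : a⁻¹ * b ≠ 1 := by
            intro hcon
            exact hab (by rw [← mul_one a, ← hcon, mul_inv_cancel_left])
          rcases pos_total _ hne with h' | h'
          · exact Or.inl h'
          · refine Or.inr (Or.inr ?_)
            simpa [mul_inv_rev] using h'
      · intro a hcon
        rw [inv_mul_cancel] at hcon
        exact pos_one hcon
      · intro a b c hab hbc
        have := pos_mul _ _ hab hbc
        simpa [mul_assoc] using this
    · intro a b c hab
      simpa [mul_assoc] using hab
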